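/- arXiv:1703.02586 — 4 statements merged into one kernel-verified Lean document; each statement's English description precedes it below -/
import Mathlib

section
/- Let d ≥ 2 and k ≥ 0 be integers. The multiplicity of the d-th cyclotomic polynomial Φ_d in the polynomial [2k]_q!! = ∏_{i=1}^{k} (1 + q + ⋯ + q^{2i−1}), regarded as a polynomial over ℚ, equals ⌊k/d⌋ if d is odd and ⌊2k/d⌋ if d is even. (Equivalently, the φ_d-weight of a Coxeter group of type B_k is ⌊k/d⌋ for d odd and ⌊k/(d/2)⌋ for d even.) -/
open Polynomial Finset

private lemma emult_cyc_cyc {d e : ℕ} (hd : 2 ≤ d) (he : 0 < e) :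
    emultiplicity (cyclotomic d ℚ) (cyclotomic e ℚ) = if e = d then 1 else 0 := by
  have hdirr := cyclotomic.irreducible_rat (show 0 < d by omega)
  split_ifs with h
  · subst h
    exact (FiniteMultiplicity.of_not_isUnit hdirr.not_isUnit
      (cyclotomic_ne_zero e ℚ)).emultiplicity_self
  · rw [emultiplicity_eq_zero]
    intro hdvd
    exact h (cyclotomic_injective (R := ℚ) (eq_of_monic_of_associated (cyclotomic.monic e ℚ)
      (cyclotomic.monic d ℚ)
      (hdirr.associated_of_dvd (cyclotomic.irreducible_rat he) hdvd).symm))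

private lemma emult_geom {d n : ℕ} (hd : 2 ≤ d) (hn : 0 < n) :
    emultiplicity (cyclotomic d ℚ) (∑ j ∈ Finset.range n, (X : ℚ[X]) ^ j)
      = if d ∣ n then 1 else 0 := by
  have hp : Prime (cyclotomic d ℚ) :=
    (cyclotomic.irreducible_rat (show 0 < d by omega)).prime
  rw [← prod_cyclotomic_eq_geom_sum hn ℚ, Finset.emultiplicity_prod hp]
  rw [Finset.sum_congr rfl (fun e hem => emult_cyc_cyc hd
    (Nat.pos_of_mem_divisors (Finset.mem_of_mem_erase hem)))]
  rw [Finset.sum_ite_eq' _ d (fun _ => (1 : ℕ∞))]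
  congr 1
  simp only [Finset.mem_erase, Nat.mem_divisors, eq_iff_iff]
  constructor
  · rintro ⟨-, h, -⟩; exact h
  · intro h; exact ⟨by omega, h, hn.ne'⟩

private lemma emult_prod (d k : ℕ) (hd : 2 ≤ d) :
    emultiplicity (cyclotomic d ℚ)
      (∏ i ∈ Finset.range k, ∑ j ∈ Finset.range (2 * (i + 1)), (X : ℚ[X]) ^ j)
      = (#{i ∈ Finset.range k | d ∣ 2 * (i + 1)} : ℕ) := by
  have hp : Prime (cyclotomic d ℚ) :=
    (cyclotomic.irreducible_rat (show 0 < d by omega)).prime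
  rw [Finset.emultiplicity_prod hp]
  rw [Finset.sum_congr rfl (fun i _ => emult_geom hd (by omega))]
  simp [Finset.sum_boole]

/--
The multiplicity of the `d`-th cyclotomic polynomial `Φ_d` in
`[2k]_q!! = ∏_{i=1}^{k} (1 + q + ⋯ + q^{2i-1})`, over `ℚ`, equals `⌊k/d⌋` if `d` is odd
and `⌊2k/d⌋` if `d` is even.
-/
theorem cyclotomic_multiplicity_qDoubleFactorial (d k : ℕ) (hd : 2 ≤ d) :
    (Odd d →
      ((Polynomial.cyclotomic d ℚ) ^ (k / d) ∣
          ∏ i ∈ Finset.range k,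
            ∑ j ∈ Finset.range (2 * (i + 1)), (Polynomial.X : Polynomial ℚ) ^ j) ∧
      ¬ ((Polynomial.cyclotomic d ℚ) ^ (k / d + 1) ∣
          ∏ i ∈ Finset.range k,
            ∑ j ∈ Finset.range (2 * (i + 1)), (Polynomial.X : Polynomial ℚ) ^ j)) ∧
    (Even d →
      ((Polynomial.cyclotomic d ℚ) ^ (2 * k / d) ∣
          ∏ i ∈ Finset.range k,
            ∑ j ∈ Finset.range (2 * (i + 1)), (Polynomial.X : Polynomial ℚ) ^ j) ∧
      ¬ ((Polynomial.cyclotomic d ℚ) ^ (2 * k / d + 1) ∣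
          ∏ i ∈ Finset.range k,
            ∑ j ∈ Finset.range (2 * (i + 1)), (Polynomial.X : Polynomial ℚ) ^ j)) := by
  constructor
  · intro hodd
    have h2 : Nat.Coprime 2 d := Nat.coprime_two_left.mpr hodd
    have hcount : #{i ∈ Finset.range k | d ∣ 2 * (i + 1)} = k / d := by
      rw [← Nat.card_multiples k d]
      congr 1
      apply Finset.filter_congr
      intro i _
      exact ⟨fun h => (Nat.Coprime.dvd_of_dvd_mul_left h2.symm h),
             fun h => h.mul_left 2⟩
    rw [← emultiplicity_eq_coe, emult_prod d k hd, hcount]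
  · intro heven
    have h2d : 2 ∣ d := heven.two_dvd
    obtain ⟨m, rfl⟩ : ∃ m, d = 2 * m := ⟨d / 2, by omega⟩
    have hm : 1 ≤ m := by omega
    have hcount : #{i ∈ Finset.range k | 2 * m ∣ 2 * (i + 1)} = 2 * k / (2 * m) := by
      rw [Nat.mul_div_mul_left _ _ (by omega : 0 < 2), ← Nat.card_multiples k m]
      congr 1
      apply Finset.filter_congr
      intro i _
      exact ⟨fun h => (Nat.mul_dvd_mul_iff_left (by omega : 0 < 2)).mp h,
             fun h => Nat.mul_dvd_mul_left 2 h⟩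
    rw [← emultiplicity_eq_coe, emult_prod _ k hd, hcount]
end

section
/- Let d ≥ 2 and n ≥ d − 1 be integers. There exists an acyclic matching M on the family of all subsets of {1, …, n} (including the empty set), ordered by inclusion, which is weighted with respect to v_d, and whose critical elements are exactly the subsets σ ⊆ {1, …, n} of one of the following two forms: (i) every maximal run of consecutive integers in σ has size at most d − 2; or (ii) σ = τ ∪ {n − d + 2, n − d + 3, …, n}, where τ ⊆ {1, …, n − d} and every maximal run of consecutive integers in τ has size at most d − 2. -/
/-- The number of consecutive elements of `σ` ending at `x`
(the position of `x` within its maximal run, `0` if `x ∉ σ`). -/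
def leftRun (σ : Finset ℕ) (x : ℕ) : ℕ :=
  (σ.filter fun y => y ≤ x ∧ Finset.Icc y x ⊆ σ).card

/-- The `φ_d`-weight of type `A`: the sum over the maximal runs of consecutive
integers of `σ`, of sizes `n_1, …, n_m`, of `⌊(n_i + 1)/d⌋`. -/
def vA (d : ℕ) (σ : Finset ℕ) : ℕ :=
  (σ.filter fun x => d ∣ (leftRun σ x + 1)).card

/-- Every maximal run of consecutive integers in `σ` has size at most `r`. -/
def RunsLE (r : ℕ) (σ : Finset ℕ) : Prop :=
  ∀ a : ℕ, ¬ Finset.Icc a (a + r) ⊆ σ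

/-- A matching on a family `P` of finite sets: a set of pairs `(τ, σ)` with
`τ ⊆ σ`, `|σ| = |τ| + 1`, every element of `P` occurring in at most one pair. -/
def IsMatching (P : Set (Finset ℕ)) (M : Set (Finset ℕ × Finset ℕ)) : Prop :=
  (∀ p ∈ M, p.1 ∈ P ∧ p.2 ∈ P ∧ p.1 ⊆ p.2 ∧ p.2.card = p.1.card + 1) ∧
  (∀ p ∈ M, ∀ q ∈ M, p ≠ q → p.1 ≠ q.1 ∧ p.1 ≠ q.2 ∧ p.2 ≠ q.1 ∧ p.2 ≠ q.2)

/-- An element of `P` is critical for `M` if it occurs in no pair of `M`. -/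
def IsCritical (P : Set (Finset ℕ)) (M : Set (Finset ℕ × Finset ℕ))
    (σ : Finset ℕ) : Prop :=
  σ ∈ P ∧ ∀ p ∈ M, p.1 ≠ σ ∧ p.2 ≠ σ

/-- Acyclicity of a matching: there is no closed alternating path
`σ_0 ⊳ τ_1 ⊲ σ_1 ⊳ τ_2 ⊲ ⋯ ⊳ τ_m ⊲ σ_m = σ_0` with `m ≥ 2`. -/
def IsAcyclic (M : Set (Finset ℕ × Finset ℕ)) : Prop :=
  ¬ ∃ (m : ℕ) (σs τs : ℕ → Finset ℕ), 2 ≤ m ∧ σs m = σs 0 ∧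
      ∀ i, 1 ≤ i → i ≤ m →
        (τs i, σs i) ∈ M ∧ τs i ⊆ σs (i - 1) ∧
        (σs (i - 1)).card = (τs i).card + 1 ∧ (τs i, σs (i - 1)) ∉ M

/-- A matching is weighted w.r.t. a weight function `v` if matched pairs have
equal weight. -/
def IsWeighted (v : Finset ℕ → ℕ) (M : Set (Finset ℕ × Finset ℕ)) : Prop :=
  ∀ p ∈ M, v p.1 = v p.2

/-- The only alternating path from the critical cell `σ` down to the critical
cell `τ` is the trivial one (`m = 0`, i.e. the single covering `σ ⊃ τ`). -/
def OnlyTrivialAltPath (M : Set (Finset ℕ × Finset ℕ)) (σ τ : Finset ℕ) : Prop :=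
  ∀ (m : ℕ) (σs τs : ℕ → Finset ℕ),
    σs 0 = σ →
    (∀ i, 1 ≤ i → i ≤ m →
      (τs i, σs i) ∈ M ∧ τs i ⊆ σs (i - 1) ∧
      (σs (i - 1)).card = (τs i).card + 1 ∧ (τs i, σs (i - 1)) ∉ M) →
    τ ⊆ σs m → (σs m).card = τ.card + 1 → m = 0

namespace TypeA

def Run (k : ℕ) (σ : Finset ℕ) (a : ℕ) : Prop := Finset.Icc a (a + k) ⊆ σ

def MinRun (k : ℕ) (σ : Finset ℕ) (a : ℕ) : Prop :=
  Run k σ a ∧ ∀ b < a, ¬ Run k σ b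

def M (k n : ℕ) : Set (Finset ℕ × Finset ℕ) :=
  { p | ∃ a, p.1 ⊆ Finset.Icc 1 n ∧ MinRun k p.1 a ∧
        a + k + 1 ∉ p.1 ∧ a + k + 1 ≤ n ∧ p.2 = insert (a + k + 1) p.1 }

variable {k n a b y : ℕ} {σ τ : Finset ℕ}

lemma minRun_unique (h1 : MinRun k σ a) (h2 : MinRun k σ b) : a = b := by
  rcases lt_trichotomy a b with h | h | h
  · exact absurd h1.1 (h2.2 a h)
  · exact h
  · exact absurd h2.1 (h1.2 b h)

lemma exists_minRun (h : ∃ a, Run k σ a) : ∃ a, MinRun k σ a := by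
  obtain ⟨a, ha⟩ := h
  induction a using Nat.strong_induction_on with
  | _ a ih =>
    by_cases h' : ∃ b < a, Run k σ b
    · obtain ⟨b, hb, hrb⟩ := h'
      exact ih b hb hrb
    · exact ⟨a, ha, fun b hb hr => h' ⟨b, hb, hr⟩⟩

lemma minRun_insert_gt (h : MinRun k τ a) (hy : a + k < y) : MinRun k (insert y τ) a := by
  refine ⟨h.1.trans (Finset.subset_insert _ _), fun b hb hr => h.2 b hb ?_⟩
  intro w hw
  have hw' := Finset.mem_Icc.mp hw
  have := hr hw
  rcases Finset.mem_insert.mp this with h' | h'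
  · omega
  · exact h'

lemma minRun_erase (h : MinRun k σ a) : MinRun k (σ.erase (a + k + 1)) a := by
  constructor
  · intro w hw
    have hw' := Finset.mem_Icc.mp hw
    exact Finset.mem_erase.mpr ⟨by omega, h.1 hw⟩
  · exact fun b hb hr => h.2 b hb (hr.trans (Finset.erase_subset _ _))

lemma one_le_of_minRun (hσ : σ ⊆ Finset.Icc 1 n) (h : MinRun k σ a) : 1 ≤ a := by
  have : a ∈ σ := h.1 (Finset.mem_Icc.mpr ⟨le_refl a, by omega⟩)
  exact (Finset.mem_Icc.mp (hσ this)).1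

lemma le_of_minRun (hσ : σ ⊆ Finset.Icc 1 n) (h : MinRun k σ a) : a + k ≤ n := by
  have : a + k ∈ σ := h.1 (Finset.mem_Icc.mpr ⟨by omega, le_refl _⟩)
  exact (Finset.mem_Icc.mp (hσ this)).2

lemma prev_notMem (hσ : σ ⊆ Finset.Icc 1 n) (h : MinRun k σ a) : a - 1 ∉ σ := by
  intro hmem
  have ha := one_le_of_minRun hσ h
  refine h.2 (a - 1) (by omega) ?_
  intro w hw
  have hw' := Finset.mem_Icc.mp hw
  rcases Nat.eq_or_lt_of_le hw'.1 with h' | h'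
  · exact h' ▸ hmem
  · exact h.1 (Finset.mem_Icc.mpr ⟨by omega, by omega⟩)

end TypeA


namespace TypeA2
open TypeA

variable {k n a z : ℕ} {τ : Finset ℕ}

lemma icc_subset_insert (hm : MinRun k τ a) :
    Finset.Icc a (a + k + 1) ⊆ insert (a + k + 1) τ := by
  intro w hw
  have hw' := Finset.mem_Icc.mp hw
  rcases Nat.eq_or_lt_of_le hw'.2 with h | h
  · exact h ▸ Finset.mem_insert_self _ _
  · exact Finset.mem_insert_of_mem (hm.1 (Finset.mem_Icc.mpr ⟨hw'.1, by omega⟩))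

lemma leftRun_insert_lt (hz : z < a + k + 1) :
    leftRun (insert (a + k + 1) τ) z = leftRun τ z := by
  unfold leftRun
  congr 1
  rw [Finset.filter_insert, if_neg (by simp; omega)]
  refine Finset.filter_congr fun y hy => ?_
  constructor
  · rintro ⟨h1, h2⟩
    refine ⟨h1, fun w hw => ?_⟩
    have hw' := Finset.mem_Icc.mp hw
    rcases Finset.mem_insert.mp (h2 hw) with h' | h'
    · omega
    · exact h'
  · rintro ⟨h1, h2⟩
    exact ⟨h1, h2.trans (Finset.subset_insert _ _)⟩

lemma prev_notMem_insert (hτ : τ ⊆ Finset.Icc 1 n) (hm : MinRun k τ a) :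
    a - 1 ∉ insert (a + k + 1) τ := by
  intro h
  rcases Finset.mem_insert.mp h with h' | h'
  · omega
  · exact prev_notMem hτ hm h'

lemma leftRun_insert_self (hτ : τ ⊆ Finset.Icc 1 n) (hm : MinRun k τ a)
    (hx : a + k + 1 ∉ τ) :
    leftRun (insert (a + k + 1) τ) (a + k + 1) = k + 2 := by
  have ha1 := one_le_of_minRun hτ hm
  have hprev := prev_notMem_insert hτ hm
  unfold leftRun
  have : ((insert (a + k + 1) τ).filter
      fun y => y ≤ a + k + 1 ∧ Finset.Icc y (a + k + 1) ⊆ insert (a + k + 1) τ)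
      = Finset.Icc a (a + k + 1) := by
    ext y
    simp only [Finset.mem_filter, Finset.mem_Icc]
    constructor
    · rintro ⟨hy, h1, h2⟩
      refine ⟨?_, h1⟩
      by_contra h
      push_neg at h
      exact hprev (h2 (Finset.mem_Icc.mpr ⟨by omega, by omega⟩))
    · rintro ⟨h1, h2⟩
      have hmem : y ∈ Finset.Icc a (a + k + 1) := Finset.mem_Icc.mpr ⟨h1, h2⟩
      refine ⟨icc_subset_insert hm hmem, h2, fun w hw => ?_⟩
      have hw' := Finset.mem_Icc.mp hw
      exact icc_subset_insert hm (Finset.mem_Icc.mpr ⟨by omega, hw'.2⟩)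
  rw [this, Nat.card_Icc]
  omega

lemma leftRun_insert_gt_gap {w : ℕ} (hz : a + k + 1 < z) (hw1 : a + k + 1 < w)
    (hw2 : w ≤ z) (hw : w ∉ τ) :
    leftRun (insert (a + k + 1) τ) z = leftRun τ z := by
  have hwσ : w ∉ insert (a + k + 1) τ := by
    intro h
    rcases Finset.mem_insert.mp h with h' | h' <;> [omega; exact hw h']
  unfold leftRun
  congr 1
  rw [Finset.filter_insert, if_neg]
  · refine Finset.filter_congr fun y hy => ?_
    constructor
    · rintro ⟨h1, h2⟩
      have hya : a + k + 1 < y := by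
        by_contra h
        push_neg at h
        exact hwσ (h2 (Finset.mem_Icc.mpr ⟨by omega, hw2⟩))
      refine ⟨h1, fun u hu => ?_⟩
      have hu' := Finset.mem_Icc.mp hu
      rcases Finset.mem_insert.mp (h2 hu) with h' | h'
      · omega
      · exact h'
    · rintro ⟨h1, h2⟩
      exact ⟨h1, h2.trans (Finset.subset_insert _ _)⟩
  · rintro ⟨h1, h2⟩
    exact hwσ (h2 (Finset.mem_Icc.mpr ⟨by omega, hw2⟩))

lemma leftRun_insert_gt_full (hτ : τ ⊆ Finset.Icc 1 n) (hm : MinRun k τ a)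
    (hx : a + k + 1 ∉ τ) (hz : a + k + 1 < z)
    (hfull : Finset.Icc (a + k + 2) z ⊆ τ) :
    leftRun (insert (a + k + 1) τ) z = leftRun τ z + (k + 2) := by
  classical
  have ha1 := one_le_of_minRun hτ hm
  have hprev := prev_notMem_insert hτ hm
  unfold leftRun
  have key : ((insert (a + k + 1) τ).filter
      fun y => y ≤ z ∧ Finset.Icc y z ⊆ insert (a + k + 1) τ)
      = (τ.filter fun y => y ≤ z ∧ Finset.Icc y z ⊆ τ) ∪ Finset.Icc a (a + k + 1) := by
    ext y
    simp only [Finset.mem_union, Finset.mem_filter, Finset.mem_Icc]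
    constructor
    · rintro ⟨hy, h1, h2⟩
      by_cases hycmp : a + k + 1 < y
      · left
        have hyτ : y ∈ τ := by
          rcases Finset.mem_insert.mp hy with h' | h' <;> [omega; exact h']
        refine ⟨hyτ, h1, fun u hu => ?_⟩
        have hu' := Finset.mem_Icc.mp hu
        rcases Finset.mem_insert.mp (h2 hu) with h' | h'
        · omega
        · exact h'
      · right
        push_neg at hycmp
        refine ⟨?_, hycmp⟩
        by_contra h
        push_neg at h
        exact hprev (h2 (Finset.mem_Icc.mpr ⟨by omega, by omega⟩))
    · rintro (⟨hy, h1, h2⟩ | ⟨h1, h2⟩)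
      · exact ⟨Finset.mem_insert_of_mem hy, h1, h2.trans (Finset.subset_insert _ _)⟩
      · refine ⟨icc_subset_insert hm (Finset.mem_Icc.mpr ⟨h1, h2⟩), by omega,
          fun u hu => ?_⟩
        have hu' := Finset.mem_Icc.mp hu
        by_cases hucmp : u ≤ a + k + 1
        · exact icc_subset_insert hm (Finset.mem_Icc.mpr ⟨by omega, hucmp⟩)
        · exact Finset.mem_insert_of_mem (hfull (Finset.mem_Icc.mpr ⟨by omega, hu'.2⟩))
  rw [key, Finset.card_union_of_disjoint, Nat.card_Icc]
  · omega
  · rw [Finset.disjoint_left]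
    rintro y hy hy'
    simp only [Finset.mem_filter] at hy
    have hy'' := Finset.mem_Icc.mp hy'
    exact hx (hy.2.2 (Finset.mem_Icc.mpr ⟨by omega, by omega⟩))

lemma vA_insert (hτ : τ ⊆ Finset.Icc 1 n) (hm : MinRun k τ a) (hx : a + k + 1 ∉ τ) :
    vA (k + 2) (insert (a + k + 1) τ) = vA (k + 2) τ := by
  classical
  unfold vA
  rw [Finset.filter_insert, if_neg]
  · refine congrArg Finset.card (Finset.filter_congr fun z hz => ?_)
    rcases lt_trichotomy z (a + k + 1) with h | h | h
    · rw [leftRun_insert_lt h]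
    · exact absurd (h ▸ hz) hx
    · by_cases hfull : Finset.Icc (a + k + 2) z ⊆ τ
      · rw [leftRun_insert_gt_full hτ hm hx h hfull]
        constructor
        · intro hd
          have : (k + 2) ∣ (leftRun τ z + (k + 2) + 1) - (k + 2) :=
            Nat.dvd_sub hd (dvd_refl _)
          simpa [Nat.add_sub_cancel, show leftRun τ z + (k+2) + 1 - (k+2) = leftRun τ z + 1 by omega] using this
        · intro hd
          have : leftRun τ z + (k + 2) + 1 = (leftRun τ z + 1) + (k + 2) := by ring
          rw [this]
          exact Nat.dvd_add hd (dvd_refl _)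
      · rw [Finset.not_subset] at hfull
        obtain ⟨w, hw1, hw2⟩ := hfull
        have hw' := Finset.mem_Icc.mp hw1
        rw [leftRun_insert_gt_gap h (by omega) hw'.2 hw2]
  · rw [leftRun_insert_self hτ hm hx]
    intro hd
    have h1 : (k + 2) ∣ (k + 2 + 1) - (k + 2) := Nat.dvd_sub hd (dvd_refl _)
    simp only [show k + 2 + 1 - (k + 2) = 1 by omega] at h1
    have := Nat.le_of_dvd one_pos h1
    omega

end TypeA2


namespace TypeA3
open TypeA TypeA2

variable {k n : ℕ}

lemma mem_M {p : Finset ℕ × Finset ℕ} (hp : p ∈ M k n) :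
    ∃ a, p.1 ⊆ Finset.Icc 1 n ∧ MinRun k p.1 a ∧
      a + k + 1 ∉ p.1 ∧ a + k + 1 ≤ n ∧ p.2 = insert (a + k + 1) p.1 := hp

lemma snd_subset {p : Finset ℕ × Finset ℕ} (hp : p ∈ M k n) :
    p.2 ⊆ Finset.Icc 1 n := by
  obtain ⟨a, h1, hm, hx, hxn, h2⟩ := hp
  rw [h2]
  exact Finset.insert_subset (Finset.mem_Icc.mpr ⟨by omega, hxn⟩) h1

lemma snd_minRun {p : Finset ℕ × Finset ℕ} (hp : p ∈ M k n) :
    ∃ a, MinRun k p.2 a ∧ a + k + 1 ∈ p.2 := by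
  obtain ⟨a, h1, hm, hx, hxn, h2⟩ := hp
  exact ⟨a, h2 ▸ minRun_insert_gt hm (by omega), h2 ▸ Finset.mem_insert_self _ _⟩

lemma matching : IsMatching {σ | σ ⊆ Finset.Icc 1 n} (M k n) := by
  constructor
  · rintro p hp
    have hp' := hp
    obtain ⟨a, h1, hm, hx, hxn, h2⟩ := hp'
    refine ⟨h1, snd_subset hp, ?_, ?_⟩
    · rw [h2]; exact Finset.subset_insert _ _
    · rw [h2, Finset.card_insert_of_notMem hx]
  · rintro p hp q hq hne
    obtain ⟨a, hp1, hmp, hxp, hxnp, hp2⟩ := hp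
    obtain ⟨b, hq1, hmq, hxq, hxnq, hq2⟩ := hq
    refine ⟨?_, ?_, ?_, ?_⟩
    · intro h
      apply hne
      have hab : a = b := minRun_unique (h ▸ hmp) hmq
      exact Prod.ext h (by rw [hp2, hq2, h, hab])
    · intro h
      rw [hq2] at h
      have h2 : MinRun k p.1 b := h ▸ minRun_insert_gt hmq (by omega)
      have hab : a = b := minRun_unique hmp h2
      exact hxp (hab ▸ h ▸ Finset.mem_insert_self _ _)
    · intro h
      rw [hp2] at h
      have h2 : MinRun k q.1 a := h ▸ minRun_insert_gt hmp (by omega)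
      have hab : b = a := minRun_unique hmq h2
      exact hxq (hab ▸ h.symm ▸ Finset.mem_insert_self _ _)
    · intro h
      apply hne
      rw [hp2, hq2] at h
      have h1 : MinRun k (insert (a + k + 1) p.1) a := minRun_insert_gt hmp (by omega)
      have h2 : MinRun k (insert (b + k + 1) q.1) b := minRun_insert_gt hmq (by omega)
      have hab : a = b := minRun_unique h1 (h ▸ h2)
      subst hab
      have hfst : p.1 = q.1 := by
        have := congrArg (fun s => s.erase (a + k + 1)) h
        simpa [Finset.erase_insert hxp, Finset.erase_insert hxq] using this
      exact Prod.ext hfst (by rw [hp2, hq2, hfst])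

lemma weighted : IsWeighted (vA (k + 2)) (M k n) := by
  rintro p hp
  obtain ⟨a, h1, hm, hx, hxn, h2⟩ := hp
  rw [h2, vA_insert h1 hm hx]

lemma acyclic : IsAcyclic (M k n) := by
  rintro ⟨m, σs, τs, hm2, hcyc, hstep⟩
  classical
  set φ : Finset ℕ → ℕ := fun σ => ∑ j ∈ σ, 2 ^ (n - j) with hφ
  have hdown : ∀ i, 1 ≤ i → i ≤ m →
      ∃ a, MinRun k (σs i) a ∧ a + k + 1 ∈ σs i := by
    intro i h1 h2
    exact snd_minRun (hstep i h1 h2).1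
  have key : ∀ i, 1 ≤ i → i ≤ m → φ (σs i) < φ (σs (i - 1)) := by
    intro i h1 hi
    obtain ⟨hMi, hsub, hcard, hnotM⟩ := hstep i h1 hi
    obtain ⟨a, hτ1, hma, hxa, hxn, hσi⟩ := hMi
    simp only at hσi hτ1 hma hxa
    -- σs (i-1) = insert y (τs i) for some y ∉ τs i
    have hcard1 : (σs (i - 1) \ τs i).card = 1 := by
      rw [Finset.card_sdiff_of_subset hsub]; omega
    obtain ⟨y, hy⟩ := Finset.card_eq_one.mp hcard1
    have hymem : y ∈ σs (i - 1) \ τs i := hy ▸ Finset.mem_singleton_self y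
    have hynot : y ∉ τs i := (Finset.mem_sdiff.mp hymem).2
    have hins : σs (i - 1) = insert y (τs i) := by
      have h3 : σs (i - 1) = (σs (i - 1) \ τs i) ∪ τs i := by
        rw [Finset.sdiff_union_of_subset hsub]
      rw [h3, hy]
      ext u; simp [Finset.mem_insert, or_comm]
    have hyx : y ≠ a + k + 1 := by
      intro h
      apply hnotM
      exact ⟨a, hτ1, hma, hxa, hxn, by rw [hins, h]⟩
    -- downward-matched info for σs (i-1)
    have hd : ∃ a', MinRun k (σs (i - 1)) a' ∧ a' + k + 1 ∈ σs (i - 1) := by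
      rcases Nat.lt_or_ge i 2 with h' | h'
      · have : i = 1 := by omega
        subst this
        simp only [Nat.sub_self]
        rw [← hcyc]
        exact hdown m (by omega) le_rfl
      · exact hdown (i - 1) (by omega) (by omega)
    obtain ⟨a', hma', hxin'⟩ := hd
    have hynotrun : y ∉ Finset.Icc a (a + k) := fun h => hynot (hma.1 h)
    have hy' := Finset.mem_Icc.not.mp hynotrun
    push_neg at hy'
    have hcases : y < a ∨ a + k + 1 < y := by
      rcases Nat.lt_or_ge y a with h | h
      · left; exact h
      · right; have := hy' h; omega
    rcases hcases with hcase | hcase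
    · -- potential decreases
      have hx_le_n : a + k + 1 ≤ n := hxn
      rw [hσi, hins, hφ]
      simp only
      rw [Finset.sum_insert hxa, Finset.sum_insert hynot]
      have : (2:ℕ) ^ (n - (a + k + 1)) < 2 ^ (n - y) :=
        Nat.pow_lt_pow_right (by norm_num) (by omega)
      omega
    · -- contradiction with downward matching of σs (i-1)
      exfalso
      have hmins : MinRun k (σs (i - 1)) a := hins ▸ minRun_insert_gt hma (by omega)
      have haa : a' = a := minRun_unique hma' hmins
      rw [haa, hins] at hxin'
      rcases Finset.mem_insert.mp hxin' with h' | h'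
      · omega
      · exact hxa h'
  have desc : ∀ j, 1 ≤ j → j ≤ m → φ (σs j) < φ (σs 0) := by
    intro j
    induction j with
    | zero => omega
    | succ j ih =>
      intro _ hj
      rcases Nat.eq_zero_or_pos j with h | h
      · subst h
        simpa using key 1 le_rfl (by omega)
      · have h1 : φ (σs (j + 1)) < φ (σs j) := by
          have := key (j + 1) (by omega) hj
          simpa using this
        exact lt_trans h1 (ih (by omega) (by omega))
  have := desc m (by omega) le_rfl
  rw [hcyc] at this
  exact lt_irrefl _ this

end TypeA3


namespace TypeA4
open TypeA TypeA2 TypeA3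

variable {k n : ℕ}

lemma critical_iff (hn : k + 1 ≤ n) {σ : Finset ℕ} (hσ : σ ⊆ Finset.Icc 1 n) :
    IsCritical {σ | σ ⊆ Finset.Icc 1 n} (M k n) σ ↔
      (RunsLE k σ ∨
        ∃ τ : Finset ℕ, τ ⊆ Finset.Icc 1 (n - (k + 2)) ∧ RunsLE k τ ∧
          σ = τ ∪ Finset.Icc (n - k) n) := by
  constructor
  · rintro ⟨-, hcrit⟩
    by_cases hex : ∃ a, Run k σ a
    · right
      obtain ⟨a, hma⟩ := exists_minRun hex
      have hxnot : a + k + 1 ∉ σ := by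
        intro hxin
        have hmem : (σ.erase (a + k + 1), σ) ∈ M k n :=
          ⟨a, (Finset.erase_subset _ _).trans hσ, minRun_erase hma,
            Finset.notMem_erase _ _, (Finset.mem_Icc.mp (hσ hxin)).2,
            (Finset.insert_erase hxin).symm⟩
        exact (hcrit _ hmem).2 rfl
      have hxgt : n < a + k + 1 := by
        by_contra h
        push_neg at h
        exact (hcrit (σ, insert (a + k + 1) σ) ⟨a, hσ, hma, hxnot, h, rfl⟩).1 rfl
      have han : a + k = n := le_antisymm (le_of_minRun hσ hma) (by omega)
      have ha1 : 1 ≤ a := one_le_of_minRun hσ hma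
      have hprev : a - 1 ∉ σ := prev_notMem hσ hma
      have haeq : n - k = a := by omega
      rw [haeq]
      refine ⟨σ \ Finset.Icc a n, ?_, ?_, ?_⟩
      · intro z hz
        rw [Finset.mem_sdiff, Finset.mem_Icc] at hz
        have hz1 := Finset.mem_Icc.mp (hσ hz.1)
        have : z ≠ a - 1 := fun h => hprev (h ▸ hz.1)
        exact Finset.mem_Icc.mpr ⟨hz1.1, by omega⟩
      · intro b hb
        have hbσ : Run k σ b := hb.trans Finset.sdiff_subset
        have hbmem : b ∈ σ \ Finset.Icc a n := hb (Finset.mem_Icc.mpr ⟨le_rfl, by omega⟩)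
        rw [Finset.mem_sdiff, Finset.mem_Icc] at hbmem
        have hbn := Finset.mem_Icc.mp (hσ hbmem.1)
        exact hma.2 b (by omega) hbσ
      · have hsub : Finset.Icc a n ⊆ σ := by
          intro w hw
          have hw' := Finset.mem_Icc.mp hw
          exact hma.1 (Finset.mem_Icc.mpr ⟨hw'.1, by omega⟩)
        exact (Finset.sdiff_union_of_subset hsub).symm
    · left
      push_neg at hex
      exact hex
  · rintro (hruns | ⟨τ, hτsub, hτruns, rfl⟩)
    · refine ⟨hσ, fun p hp => ⟨?_, ?_⟩⟩
      · rintro rfl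
        obtain ⟨a, h1, hmp, hxp, hxn, h2⟩ := hp
        exact hruns a hmp.1
      · intro h
        obtain ⟨a, h1, hmp, hxp, hxn, h2⟩ := hp
        refine hruns a ?_
        rw [← h, h2]
        exact hmp.1.trans (Finset.subset_insert _ _)
    · have hprevnot : n - k - 1 ∉ τ ∪ Finset.Icc (n - k) n := by
        intro h
        rcases Finset.mem_union.mp h with h' | h'
        · have := Finset.mem_Icc.mp (hτsub h'); omega
        · have := Finset.mem_Icc.mp h'; omega
      have hmin : MinRun k (τ ∪ Finset.Icc (n - k) n) (n - k) := by
        constructor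
        · intro w hw
          have hw' := Finset.mem_Icc.mp hw
          exact Finset.mem_union_right _ (Finset.mem_Icc.mpr ⟨hw'.1, by omega⟩)
        · intro b hb hrb
          by_cases hmem : n - k - 1 ∈ Finset.Icc b (b + k)
          · exact hprevnot (hrb hmem)
          · rw [Finset.mem_Icc] at hmem
            push_neg at hmem
            refine hτruns b (fun w hw => ?_)
            have hw' := Finset.mem_Icc.mp hw
            rcases Finset.mem_union.mp (hrb hw) with h' | h'
            · exact h'
            · have := Finset.mem_Icc.mp h'
              omega
      refine ⟨hσ, fun p hp => ⟨?_, ?_⟩⟩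
      · intro h
        obtain ⟨a, h1, hmp, hxp, hxn, h2⟩ := hp
        have ha := minRun_unique (h ▸ hmp) hmin
        omega
      · intro h
        obtain ⟨a, h1, hmp, hxp, hxn, h2⟩ := hp
        have hm2 : MinRun k p.2 a := h2 ▸ minRun_insert_gt hmp (by omega)
        have ha := minRun_unique (h ▸ hm2) hmin
        omega

end TypeA4

/--
For `d ≥ 2` and `n ≥ d - 1` there is an acyclic matching on the family of all
subsets of `{1, …, n}`, weighted with respect to `v_d`, whose critical elements
are exactly: (i) the subsets all of whose maximal runs have size at most `d - 2`,
and (ii) the subsets of the form `τ ∪ {n-d+2, …, n}` with `τ ⊆ {1, …, n-d}`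
all of whose maximal runs have size at most `d - 2`.
-/
theorem exists_weighted_acyclic_matching_typeA (d n : ℕ) (hd : 2 ≤ d) (hn : d - 1 ≤ n) :
    ∃ M : Set (Finset ℕ × Finset ℕ),
      IsMatching {σ | σ ⊆ Finset.Icc 1 n} M ∧
      IsAcyclic M ∧
      IsWeighted (vA d) M ∧
      ∀ σ : Finset ℕ, σ ⊆ Finset.Icc 1 n →
        (IsCritical {σ | σ ⊆ Finset.Icc 1 n} M σ ↔
          (RunsLE (d - 2) σ ∨
            ∃ τ : Finset ℕ, τ ⊆ Finset.Icc 1 (n - d) ∧ RunsLE (d - 2) τ ∧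
              σ = τ ∪ Finset.Icc (n + 2 - d) n)) := by
  obtain ⟨k, rfl⟩ : ∃ k, d = k + 2 := ⟨d - 2, by omega⟩
  have hn' : k + 1 ≤ n := by omega
  refine ⟨TypeA.M k n, TypeA3.matching, TypeA3.acyclic, TypeA3.weighted, ?_⟩
  intro σ hσ
  have h1 : k + 2 - 2 = k := by omega
  have h2 : n + 2 - (k + 2) = n - k := by omega
  rw [h1, h2]
  exact TypeA4.critical_iff hn' hσ
end

section
/- Let n ≥ 0 and d ≥ 2 be integers. Then ∑ (−1)^{|σ|}, the sum ranging over all subsets σ ⊆ {1, …, n} (including the empty set) all of whose maximal runs of consecutive integers have size at most d − 2, equals (−1)^{kd} if n = kd or n = kd − 1 for some integer k ≥ 0, and equals 0 otherwise. (This is the reduced Euler characteristic computation for the independence complex Ind_{d−2}(A_n), which is homotopy equivalent to a sphere when n ≡ 0 or −1 mod d and contractible otherwise.) -/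
section EulerAux
open Finset


open Classical in
noncomputable def Pfam (d n : ℕ) : Finset (Finset ℕ) :=
  (Finset.Icc 1 n).powerset.filter (RunsLE (d - 2))

noncomputable def Fv (d n : ℕ) : ℤ := ∑ σ ∈ Pfam d n, (-1) ^ σ.card

lemma mem_Pfam {d n : ℕ} {σ : Finset ℕ} :
    σ ∈ Pfam d n ↔ σ ⊆ Finset.Icc 1 n ∧ RunsLE (d - 2) σ := by
  simp [Pfam, Finset.mem_filter, Finset.mem_powerset]

lemma runsLE_mono {r : ℕ} {σ τ : Finset ℕ} (h : σ ⊆ τ) (hτ : RunsLE r τ) :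
    RunsLE r σ := fun a ha => hτ a (ha.trans h)

lemma Fv_zero (d : ℕ) : Fv d 0 = 1 := by
  have h : Pfam d 0 = {∅} := by
    ext σ
    simp only [mem_Pfam, Finset.mem_singleton]
    constructor
    · rintro ⟨h1, -⟩
      rw [show Finset.Icc 1 0 = ∅ from by simp] at h1
      exact Finset.subset_empty.mp h1
    · rintro rfl
      refine ⟨by simp, fun a ha => ?_⟩
      have : a ∈ (∅ : Finset ℕ) := ha (by simp [Finset.mem_Icc])
      simp at this
  simp [Fv, h]

lemma Fv_small (d m : ℕ) (h1 : 1 ≤ m) (h2 : m ≤ d - 2) : Fv d m = 0 := by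
  have h : Pfam d m = (Finset.Icc 1 m).powerset := by
    ext σ
    simp only [mem_Pfam, Finset.mem_powerset, and_iff_left_iff_imp]
    intro hσ a ha
    have hc := Finset.card_le_card ha
    have hc2 := Finset.card_le_card hσ
    rw [Nat.card_Icc] at hc hc2
    omega
  rw [Fv, h]
  exact Finset.sum_powerset_neg_one_pow_card_of_nonempty (by simp [h1])

lemma char_image {d n j : ℕ} (hd : 2 ≤ d) (hn : d - 1 ≤ n) (hj : j < d - 1)
    (σ : Finset ℕ) :
    σ ∈ (Pfam d (n-1-j)).image (fun τ => τ ∪ Finset.Icc (n+1-j) n) ↔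
      σ ∈ Pfam d n ∧ Finset.Icc (n+1-j) n ⊆ σ ∧ n - j ∉ σ := by
  constructor
  · rintro h
    rw [Finset.mem_image] at h
    obtain ⟨τ, hτmem, rfl⟩ := h
    obtain ⟨hτsub, hτruns⟩ := mem_Pfam.mp hτmem
    have hτub : ∀ x ∈ τ, 1 ≤ x ∧ x ≤ n - 1 - j := by
      intro x hx; exact Finset.mem_Icc.mp (hτsub hx)
    have hnj : n - j ∉ τ ∪ Finset.Icc (n+1-j) n := by
      intro h
      rcases Finset.mem_union.mp h with h | h
      · have := hτub _ h; omega
      · have := Finset.mem_Icc.mp h; omega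
    refine ⟨mem_Pfam.mpr ⟨?_, ?_⟩, ?_, hnj⟩
    · intro x hx
      rcases Finset.mem_union.mp hx with h | h
      · have := hτub _ h; simp [Finset.mem_Icc]; omega
      · have := Finset.mem_Icc.mp h; simp [Finset.mem_Icc]; omega
    · intro a hsub
      by_cases hcase : a ≤ n - j ∧ n - j ≤ a + (d - 2)
      · exact hnj (hsub (Finset.mem_Icc.mpr hcase))
      push_neg at hcase
      by_cases h1 : n - j < a
      · have h2 : a + (d-2) ∈ τ ∪ Finset.Icc (n+1-j) n :=
          hsub (Finset.mem_Icc.mpr ⟨by omega, le_refl _⟩)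
        rcases Finset.mem_union.mp h2 with h | h
        · have := hτub _ h; omega
        · have := Finset.mem_Icc.mp h; omega
      · push_neg at h1
        have h2 : a + (d - 2) < n - j := hcase h1
        refine hτruns a (fun x hx => ?_)
        have hx' := Finset.mem_Icc.mp hx
        rcases Finset.mem_union.mp (hsub hx) with h | h
        · exact h
        · have := Finset.mem_Icc.mp h; omega
    · exact Finset.subset_union_right
  · rintro ⟨hmem, hRsub, hnj⟩
    obtain ⟨hsub, hruns⟩ := mem_Pfam.mp hmem
    rw [Finset.mem_image]
    refine ⟨σ \ Finset.Icc (n+1-j) n, mem_Pfam.mpr ⟨?_, runsLE_mono Finset.sdiff_subset hruns⟩,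
      Finset.sdiff_union_of_subset hRsub⟩
    intro x hx
    obtain ⟨hx1, hx2⟩ := Finset.mem_sdiff.mp hx
    have h1 := Finset.mem_Icc.mp (hsub hx1)
    rw [Finset.mem_Icc] at hx2
    have : x ≠ n - j := fun h => hnj (h ▸ hx1)
    simp [Finset.mem_Icc]; omega

open Classical in
lemma Fv_rec (d n : ℕ) (hd : 2 ≤ d) (hn : d - 1 ≤ n) :
    Fv d n = ∑ j ∈ Finset.range (d-1), (-1)^j * Fv d (n-1-j) := by
  have hPn : Pfam d n =
      (Finset.range (d-1)).biUnion
        (fun j => (Pfam d (n-1-j)).image (fun τ => τ ∪ Finset.Icc (n+1-j) n)) := by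
    ext σ
    simp only [Finset.mem_biUnion, Finset.mem_range]
    constructor
    · intro hσ
      obtain ⟨hsub, hruns⟩ := mem_Pfam.mp hσ
      have hex : ∃ t, n - t ∉ σ := by
        refine ⟨n, fun h => ?_⟩
        have := Finset.mem_Icc.mp (hsub (by simpa using h))
        omega
      set j := Nat.find hex with hjdef
      have hj1 : n - j ∉ σ := Nat.find_spec hex
      have hj2 : ∀ i < j, n - i ∈ σ := fun i hi => not_not.mp (Nat.find_min hex hi)
      have hjle : j ≤ d - 2 := by
        by_contra hcon
        push_neg at hcon
        refine hruns (n - (d-2)) (fun x hx => ?_)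
        have hx' := Finset.mem_Icc.mp hx
        have h3 : n - (n - x) ∈ σ := hj2 (n - x) (by omega)
        rwa [show n - (n - x) = x from by omega] at h3
      refine ⟨j, by omega, (char_image hd hn (by omega) σ).mpr ⟨hσ, ?_, hj1⟩⟩
      intro x hx
      have hx' := Finset.mem_Icc.mp hx
      have h3 : n - (n - x) ∈ σ := hj2 (n - x) (by omega)
      rwa [show n - (n - x) = x from by omega] at h3
    · rintro ⟨j, hj, hmem⟩
      exact ((char_image hd hn hj σ).mp hmem).1
  have hdisj : Set.PairwiseDisjoint ↑(Finset.range (d-1))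
      (fun j => (Pfam d (n-1-j)).image (fun τ => τ ∪ Finset.Icc (n+1-j) n)) := by
    intro j hj j' hj' hne
    simp only [Finset.coe_range, Set.mem_Iio] at hj hj'
    rw [Function.onFun, Finset.disjoint_left]
    intro σ hσ hσ'
    obtain ⟨-, hR, hnot⟩ := (char_image hd hn hj σ).mp hσ
    obtain ⟨-, hR', hnot'⟩ := (char_image hd hn hj' σ).mp hσ'
    rcases Nat.lt_or_ge j j' with h | h
    · exact hnot (hR' (Finset.mem_Icc.mpr ⟨by omega, by omega⟩))
    · have h' : j' < j := by omega
      exact hnot' (hR (Finset.mem_Icc.mpr ⟨by omega, by omega⟩))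
  rw [Fv, hPn, Finset.sum_biUnion hdisj]
  refine Finset.sum_congr rfl (fun j hj => ?_)
  rw [Finset.mem_range] at hj
  rw [Finset.sum_image ?hinj]
  case hinj =>
    intro τ hτ τ' hτ' heq
    have hdisjR : ∀ ρ : Finset ℕ, ρ ∈ Pfam d (n-1-j) → Disjoint ρ (Finset.Icc (n+1-j) n) := by
      intro ρ hρ
      rw [Finset.disjoint_left]
      intro x hx hx'
      have h1 := Finset.mem_Icc.mp ((mem_Pfam.mp hρ).1 hx)
      have h2 := Finset.mem_Icc.mp hx'
      omega
    have h1 := Finset.union_sdiff_cancel_right (hdisjR τ hτ)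
    have h2 := Finset.union_sdiff_cancel_right (hdisjR τ' hτ')
    rw [← h1, ← h2, show τ ∪ Finset.Icc (n+1-j) n = τ' ∪ Finset.Icc (n+1-j) n from heq]
  rw [Fv, Finset.mul_sum]
  refine Finset.sum_congr rfl (fun τ hτ => ?_)
  have hdisjR : Disjoint τ (Finset.Icc (n+1-j) n) := by
    rw [Finset.disjoint_left]
    intro x hx hx'
    have h1 := Finset.mem_Icc.mp ((mem_Pfam.mp hτ).1 hx)
    have h2 := Finset.mem_Icc.mp hx'
    omega
  rw [Finset.card_union_of_disjoint hdisjR, Nat.card_Icc,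
    show n + 1 - (n + 1 - j) = j from by omega, pow_add, mul_comm]

lemma neg_one_pow_sub_two (d : ℕ) (hd : 2 ≤ d) : ((-1:ℤ))^(d-2) = (-1)^d := by
  have : ((-1:ℤ))^d = (-1)^(d-2) * (-1)^2 := by
    rw [← pow_add]; congr 1; omega
  rw [this]; ring

lemma Fv_tel (d n : ℕ) (hd : 2 ≤ d) (hn : d ≤ n) :
    Fv d n = (-1)^d * Fv d (n - d) := by
  have h1 := Fv_rec d n hd (by omega)
  have h2 := Fv_rec d (n-1) hd (by omega)
  rw [show d - 1 = (d-2) + 1 from by omega] at h1 h2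
  rw [Finset.sum_range_succ'] at h1
  rw [Finset.sum_range_succ] at h2
  simp only [pow_zero, one_mul, Nat.sub_zero] at h1
  have e1 : ∀ j, n - 1 - (j+1) = n - 1 - 1 - j := fun j => by omega
  have e2 : ∀ j : ℕ, ((-1:ℤ))^(j+1) = -(-1)^j := fun j => by ring
  rw [Finset.sum_congr rfl (fun j _ => by rw [e1 j, e2 j, neg_mul])] at h1
  rw [Finset.sum_neg_distrib] at h1
  rw [h2] at h1
  rw [h1, show n - 1 - 1 - (d-2) = n - d from by omega, neg_one_pow_sub_two d hd]
  ring

lemma Fv_top (d : ℕ) (hd : 2 ≤ d) : Fv d (d - 1) = (-1)^d := by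
  have h1 := Fv_rec d (d-1) hd (le_refl _)
  rw [show d - 1 = (d-2)+1 from by omega, Finset.sum_range_succ] at h1
  rw [show d - 2 + 1 - 1 - (d - 2) = 0 from by omega, Fv_zero] at h1
  have hz : ∑ j ∈ Finset.range (d-2), (-1:ℤ)^j * Fv d (d-2+1-1-j) = 0 :=
    Finset.sum_eq_zero (fun j hj => by
      rw [Finset.mem_range] at hj
      rw [Fv_small d (d-2+1-1-j) (by omega) (by omega), mul_zero])
  rw [hz, zero_add, mul_one] at h1
  rw [show d - 1 = d - 2 + 1 from by omega, h1, neg_one_pow_sub_two d hd]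

lemma Fv_closed (d : ℕ) (hd : 2 ≤ d) : ∀ n : ℕ,
    Fv d n = if n % d = 0 then (-1)^n else if (n+1) % d = 0 then (-1)^(n+1) else 0 := by
  intro n
  induction n using Nat.strong_induction_on with
  | _ n ih =>
    rcases Nat.lt_or_ge n d with hn | hn
    · have hx : n % d = n := Nat.mod_eq_of_lt hn
      rcases Nat.eq_zero_or_pos n with rfl | hpos
      · simp [Fv_zero]
      rcases Nat.lt_or_ge n (d-1) with hsm | hbig
      · have hy : (n+1) % d = n+1 := Nat.mod_eq_of_lt (by omega)
        rw [Fv_small d n hpos (by omega), if_neg (by omega), if_neg (by omega)]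
      · have hn' : n = d - 1 := by omega
        have hy : (n+1) % d = 0 := by
          rw [show n + 1 = d from by omega, Nat.mod_self]
        rw [if_neg (by omega), if_pos hy, hn', Fv_top d hd,
          show d - 1 + 1 = d from by omega]
    · have hmod : (n - d) % d = n % d := (Nat.mod_eq_sub_mod hn).symm
      have hmod2 : (n - d + 1) % d = (n + 1) % d := by
        rw [Nat.mod_eq_sub_mod (by omega : d ≤ n + 1),
          show n + 1 - d = n - d + 1 from by omega]
      rw [Fv_tel d n hd hn, ih (n-d) (by omega), hmod, hmod2]
      have p1 : ((-1:ℤ))^n = (-1)^d * (-1)^(n-d) := by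
        rw [← pow_add]; congr 1; omega
      have p2 : ((-1:ℤ))^(n+1) = (-1)^d * (-1)^(n-d+1) := by
        rw [← pow_add]; congr 1; omega
      by_cases h0 : n % d = 0
      · rw [if_pos h0, if_pos h0, p1]
      · rw [if_neg h0, if_neg h0]
        by_cases h1 : (n+1) % d = 0
        · rw [if_pos h1, if_pos h1, p2]
        · rw [if_neg h1, if_neg h1, mul_zero]

end EulerAux

open Classical in
/--
The signed count `∑ (-1)^{|σ|}` over all subsets `σ ⊆ {1, …, n}` all of whose
maximal runs of consecutive integers have size at most `d - 2` equals
`(-1)^{kd}` if `n = kd` or `n = kd - 1` for some `k ≥ 0`, and `0` otherwise.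
-/
theorem euler_char_independence_complex (n d : ℕ) (hd : 2 ≤ d) :
    (∀ k : ℕ, (n = k * d ∨ n + 1 = k * d) →
      ∑ σ ∈ (Finset.Icc 1 n).powerset.filter (RunsLE (d - 2)),
        (-1 : ℤ) ^ σ.card = (-1 : ℤ) ^ (k * d)) ∧
    ((¬ ∃ k : ℕ, n = k * d ∨ n + 1 = k * d) →
      ∑ σ ∈ (Finset.Icc 1 n).powerset.filter (RunsLE (d - 2)),
        (-1 : ℤ) ^ σ.card = 0) := by
  have hF : (∑ σ ∈ (Finset.Icc 1 n).powerset.filter (RunsLE (d - 2)),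
      (-1:ℤ)^σ.card) = Fv d n := rfl
  constructor
  · intro k hk
    rw [hF, Fv_closed d hd n]
    rcases hk with rfl | h
    · rw [if_pos (Nat.mul_mod_left k d)]
    · have h0 : (n+1) % d = 0 := by rw [h]; exact Nat.mul_mod_left k d
      have h1 : n % d ≠ 0 := by
        intro hc
        have hd1 : d ∣ 1 := by
          have := Nat.dvd_sub (Nat.dvd_of_mod_eq_zero h0) (Nat.dvd_of_mod_eq_zero hc)
          simpa using this
        have := Nat.le_of_dvd one_pos hd1
        omega
      rw [if_neg h1, if_pos h0, h]
  · intro hno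
    rw [hF, Fv_closed d hd n]
    have h1 : n % d ≠ 0 := fun hc =>
      hno ⟨n / d, Or.inl (Nat.div_mul_cancel (Nat.dvd_of_mod_eq_zero hc)).symm⟩
    have h2 : (n+1) % d ≠ 0 := fun hc =>
      hno ⟨(n+1) / d, Or.inr (Nat.div_mul_cancel (Nat.dvd_of_mod_eq_zero hc)).symm⟩
    rw [if_neg h1, if_neg h2]
end

section
/- Let d ≥ 2 be an integer and let σ ⊆ τ be finite sets of positive integers. Then v_d(σ) ≤ v_d(τ). (This is the monotonicity of the φ_d-weight underlying the weighted sheaf of type A: enlarging a simplex can only increase the multiplicity of the d-th cyclotomic polynomial in the Poincaré polynomial of the associated parabolic subgroup.) -/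
namespace VAaux

lemma mem_F (σ : Finset ℕ) (x : ℕ) (hx : x ∈ σ) :
    x ∈ σ.filter (fun y => y ≤ x ∧ Finset.Icc y x ⊆ σ) := by
  refine Finset.mem_filter.2 ⟨hx, le_refl x, ?_⟩
  intro z hz
  rw [Finset.mem_Icc] at hz
  have : z = x := le_antisymm hz.2 hz.1
  rwa [this]

lemma filter_eq (σ : Finset ℕ) (x : ℕ) (hx : x ∈ σ) :
    σ.filter (fun y => y ≤ x ∧ Finset.Icc y x ⊆ σ) =
      Finset.Icc (x + 1 - leftRun σ x) x := by
  have hne : (σ.filter fun y => y ≤ x ∧ Finset.Icc y x ⊆ σ).Nonempty :=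
    ⟨x, mem_F σ x hx⟩
  set F := σ.filter (fun y => y ≤ x ∧ Finset.Icc y x ⊆ σ) with hF
  set m := F.min' hne with hm
  have hFeq : F = Finset.Icc m x := by
    have hmF : m ∈ F := F.min'_mem hne
    obtain ⟨hmσ, hmx, hmsub⟩ := Finset.mem_filter.1 hmF
    ext y
    simp only [Finset.mem_Icc]
    constructor
    · intro hyF
      exact ⟨F.min'_le y hyF, (Finset.mem_filter.1 hyF).2.1⟩
    · rintro ⟨h1, h2⟩
      refine Finset.mem_filter.2 ⟨hmsub (Finset.mem_Icc.2 ⟨h1, h2⟩), h2, ?_⟩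
      intro z hz
      rw [Finset.mem_Icc] at hz
      exact hmsub (Finset.mem_Icc.2 ⟨le_trans h1 hz.1, hz.2⟩)
  have hmx : m ≤ x := F.min'_le x (mem_F σ x hx)
  have hcard : leftRun σ x = x + 1 - m := by
    rw [leftRun, ← hF, hFeq, Nat.card_Icc]
  rw [hFeq, hcard]
  congr 1
  omega

lemma one_le (σ : Finset ℕ) (x : ℕ) (hx : x ∈ σ) : 1 ≤ leftRun σ x := by
  rw [leftRun]
  exact Finset.card_pos.2 ⟨x, mem_F σ x hx⟩

lemma Icc_subset (σ : Finset ℕ) (x : ℕ) (hx : x ∈ σ) :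
    Finset.Icc (x + 1 - leftRun σ x) x ⊆ σ := by
  rw [← filter_eq σ x hx]
  exact Finset.filter_subset _ _

lemma le_self (σ : Finset ℕ) (x : ℕ) (h0 : 0 ∉ σ) (hx : x ∈ σ) :
    leftRun σ x ≤ x := by
  by_contra h
  push_neg at h
  have h0m : (0 : ℕ) ∈ Finset.Icc (x + 1 - leftRun σ x) x := by
    rw [Finset.mem_Icc]
    omega
  exact h0 (Icc_subset σ x hx h0m)

lemma not_mem (σ : Finset ℕ) (x : ℕ) (h0 : 0 ∉ σ) (hx : x ∈ σ) :
    x - leftRun σ x ∉ σ := by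
  intro hz
  have hL1 : 1 ≤ leftRun σ x := one_le σ x hx
  have hLx : leftRun σ x ≤ x := le_self σ x h0 hx
  set L := leftRun σ x with hL
  have hzF : x - L ∈ σ.filter (fun y => y ≤ x ∧ Finset.Icc y x ⊆ σ) := by
    refine Finset.mem_filter.2 ⟨hz, by omega, ?_⟩
    intro z hzc
    rw [Finset.mem_Icc] at hzc
    rcases Nat.eq_or_lt_of_le hzc.1 with heq | hlt
    · rwa [← heq]
    · exact Icc_subset σ x hx (Finset.mem_Icc.2 ⟨by omega, hzc.2⟩)
  rw [filter_eq σ x hx, Finset.mem_Icc] at hzF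
  omega

lemma shift (σ : Finset ℕ) (x k : ℕ) (h0 : 0 ∉ σ) (hx : x ∈ σ)
    (hk : k + 1 ≤ leftRun σ x) :
    x - k ∈ σ ∧ leftRun σ (x - k) = leftRun σ x - k := by
  have hL1 : 1 ≤ leftRun σ x := one_le σ x hx
  have hLx : leftRun σ x ≤ x := le_self σ x h0 hx
  set L := leftRun σ x with hL
  set m := x + 1 - L with hm
  have hmem : x - k ∈ σ :=
    Icc_subset σ x hx (Finset.mem_Icc.2 ⟨by omega, by omega⟩)
  refine ⟨hmem, ?_⟩
  have hF' : σ.filter (fun y => y ≤ x - k ∧ Finset.Icc y (x - k) ⊆ σ) =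
      Finset.Icc m (x - k) := by
    ext y
    constructor
    · intro hyF
      obtain ⟨hyσ, hy1, hy2⟩ := Finset.mem_filter.1 hyF
      rw [Finset.mem_Icc]
      refine ⟨?_, hy1⟩
      by_contra hym
      push_neg at hym
      have hm1 : m - 1 ∈ Finset.Icc y (x - k) := Finset.mem_Icc.2 ⟨by omega, by omega⟩
      have : m - 1 = x - L := by omega
      exact not_mem σ x h0 hx (this ▸ hy2 hm1)
    · intro hy
      rw [Finset.mem_Icc] at hy
      refine Finset.mem_filter.2 ⟨Icc_subset σ x hx (Finset.mem_Icc.2 ⟨hy.1, by omega⟩),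
        hy.2, ?_⟩
      intro z hz
      rw [Finset.mem_Icc] at hz
      exact Icc_subset σ x hx (Finset.mem_Icc.2 ⟨le_trans hy.1 hz.1, by omega⟩)
  rw [leftRun, hF', Nat.card_Icc]
  omega

lemma mono (σ τ : Finset ℕ) (x : ℕ) (h : σ ⊆ τ) :
    leftRun σ x ≤ leftRun τ x := by
  apply Finset.card_le_card
  intro y hy
  obtain ⟨hyσ, hy1, hy2⟩ := Finset.mem_filter.1 hy
  exact Finset.mem_filter.2 ⟨h hyσ, hy1, fun z hz => h (hy2 hz)⟩

lemma r_add_one_le (d : ℕ) (hd : 2 ≤ d) (Lσ Lτ : ℕ) (hdvd : d ∣ Lσ + 1)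
    (hLσ : 1 ≤ Lσ) (hmono : Lσ ≤ Lτ) : (Lτ + 1) % d + 1 ≤ Lτ := by
  have hLd : d ≤ Lσ + 1 := Nat.le_of_dvd (by omega) hdvd
  have hdm := Nat.div_add_mod (Lτ + 1) d
  have hr : (Lτ + 1) % d < d := Nat.mod_lt _ (by omega)
  have hq : 1 ≤ (Lτ + 1) / d := (Nat.one_le_div_iff (by omega)).2 (by omega)
  have hdq : d ≤ d * ((Lτ + 1) / d) := Nat.le_mul_of_pos_right d hq
  omega

lemma maps (d : ℕ) (hd : 2 ≤ d) (τ : Finset ℕ) (h0 : 0 ∉ τ) (x : ℕ)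
    (hx : x ∈ τ) (Lσ : ℕ) (hdvd : d ∣ Lσ + 1) (hLσ : 1 ≤ Lσ)
    (hmono : Lσ ≤ leftRun τ x) :
    x - (leftRun τ x + 1) % d ∈ τ ∧
      d ∣ leftRun τ (x - (leftRun τ x + 1) % d) + 1 := by
  set Lτ := leftRun τ x with hLτ
  set r := (Lτ + 1) % d with hr
  have hrL : r + 1 ≤ Lτ := r_add_one_le d hd Lσ Lτ hdvd hLσ hmono
  obtain ⟨hmem, heq⟩ := shift τ x r h0 hx hrL
  refine ⟨hmem, ?_⟩
  rw [heq]
  have hdm := Nat.div_add_mod (Lτ + 1) d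
  exact ⟨(Lτ + 1) / d, by omega⟩

lemma inj_key (d : ℕ) (hd : 2 ≤ d) (σ τ : Finset ℕ) (h0 : 0 ∉ τ)
    (hστ : σ ⊆ τ) (x y : ℕ) (hx : x ∈ σ) (hdx : d ∣ leftRun σ x + 1)
    (hy : y ∈ σ) (hdy : d ∣ leftRun σ y + 1) (hxy : x ≤ y)
    (hf : x - (leftRun τ x + 1) % d = y - (leftRun τ y + 1) % d) : x = y := by
  have h0σ : 0 ∉ σ := fun h => h0 (hστ h)
  set Lσx := leftRun σ x with hLσx
  set Lσy := leftRun σ y with hLσy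
  set Lτx := leftRun τ x with hLτx
  set Lτy := leftRun τ y with hLτy
  set rx := (Lτx + 1) % d with hrx
  set ry := (Lτy + 1) % d with hry
  have h1x : 1 ≤ Lσx := one_le σ x hx
  have h1y : 1 ≤ Lσy := one_le σ y hy
  have hmx : Lσx ≤ Lτx := mono σ τ x hστ
  have hmy : Lσy ≤ Lτy := mono σ τ y hστ
  have hrxL : rx + 1 ≤ Lτx := r_add_one_le d hd Lσx Lτx hdx h1x hmx
  have hryL : ry + 1 ≤ Lτy := r_add_one_le d hd Lσy Lτy hdy h1y hmy
  have hLyy : Lτy ≤ y := le_self τ y h0 (hστ hy)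
  have hLxx : Lτx ≤ x := le_self τ x h0 (hστ hx)
  have hryd : ry < d := Nat.mod_lt _ (by omega)
  -- k = y - x ≤ ry < d
  have hk : y - x ≤ ry := by omega
  by_contra hne
  have hk1 : 1 ≤ y - x := by omega
  have hdLσy : d ≤ Lσy + 1 := Nat.le_of_dvd (by omega) hdy
  by_cases hcase : y - x + 1 ≤ Lσy
  · obtain ⟨hmem, heq⟩ := shift σ y (y - x) h0σ hy hcase
    have hxx : y - (y - x) = x := by omega
    rw [hxx] at hmem heq
    have hdvdk : d ∣ (Lσy + 1) - (Lσx + 1) := Nat.dvd_sub hdy hdx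
    have : Lσy + 1 - (Lσx + 1) = y - x := by omega
    rw [this] at hdvdk
    have := Nat.le_of_dvd (by omega) hdvdk
    omega
  · -- y - x ≥ Lσy, but y - x ≤ ry < d ≤ Lσy + 1, so y - x = Lσy
    have hkL : y - x = Lσy := by omega
    have : y - Lσy = x := by omega
    exact not_mem σ y h0σ hy (this ▸ hx) |>.elim

end VAaux

/--
Monotonicity of the type-`A` weight `v_d`: if `σ ⊆ τ` are finite sets of
positive integers, then `v_d σ ≤ v_d τ`.
-/
theorem vA_mono (d : ℕ) (hd : 2 ≤ d) (σ τ : Finset ℕ)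
    (hpos : ∀ x ∈ τ, 0 < x) (hστ : σ ⊆ τ) :
    vA d σ ≤ vA d τ := by
  have h0τ : 0 ∉ τ := fun h => absurd (hpos 0 h) (lt_irrefl 0)
  rw [vA, vA]
  apply Finset.card_le_card_of_injOn (fun x => x - (leftRun τ x + 1) % d)
  · intro x hx
    obtain ⟨hxσ, hdvd⟩ := Finset.mem_filter.1 hx
    obtain ⟨h1, h2⟩ := VAaux.maps d hd τ h0τ x (hστ hxσ) (leftRun σ x) hdvd
      (VAaux.one_le σ x hxσ) (VAaux.mono σ τ x hστ)
    exact Finset.mem_filter.2 ⟨h1, h2⟩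
  · intro x hx y hy hf
    simp only [Finset.coe_filter, Set.mem_setOf_eq] at hx hy
    rcases le_total x y with h | h
    · exact VAaux.inj_key d hd σ τ h0τ hστ x y hx.1 hx.2 hy.1 hy.2 h hf
    · exact (VAaux.inj_key d hd σ τ h0τ hστ y x hy.1 hy.2 hx.1 hx.2 h hf.symm).symm
end
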